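/- Let G be a finite simple graph and s, t two distinct vertices. There exist two internally vertex-disjoint s–t paths in G if and only if for every vertex v ∉ {s,t}, the graph G − v (obtained by deleting v) still contains an s–t path, and G contains an s–t path. -/

import Mathlib

open SimpleGraph Walk

section MengerAux

variable {V : Type*}

private lemma menger_takeUntil_dropUntil {G : SimpleGraph V} [DecidableEq V] {a b x u : V}
    {p : G.Walk a b} (hp : p.IsPath) (hx : x ∈ p.support)
    (h1 : u ∈ (p.takeUntil x hx).support) (h2 : u ∈ (p.dropUntil x hx).support) : u = x := by
  have hs := p.take_spec hx
  have hnd : ((p.takeUntil x hx).append (p.dropUntil x hx)).support.Nodup := by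
    rw [hs]; exact hp.support_nodup
  rw [Walk.support_append, List.nodup_append] at hnd
  obtain ⟨-, -, hdisj⟩ := hnd
  rw [(p.dropUntil x hx).support_eq_cons] at h2
  rcases List.mem_cons.mp h2 with h2 | h2
  · exact h2
  · exact absurd rfl (hdisj u h1 u h2)

private lemma menger_last_entry {G : SimpleGraph V} (S : V → Prop) :
    ∀ {u t : V} (Q : G.Walk u t), ¬ S t → (∃ y ∈ Q.support, S y) →
    ∃ x, S x ∧ ∃ r : G.Walk x t, (∀ y ∈ r.support, y ∈ Q.support) ∧
      ∀ y ∈ r.support, y ≠ x → ¬ S y := by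
  intro u t Q
  induction Q with
  | nil =>
    rintro htS ⟨y, hy, hS⟩
    simp only [support_nil, List.mem_singleton] at hy
    exact absurd (hy ▸ hS) htS
  | @cons a b c h q ih =>
    rintro htS ⟨y, hy, hS⟩
    by_cases hq : ∃ z ∈ q.support, S z
    · obtain ⟨x, hxS, r, hr1, hr2⟩ := ih htS hq
      refine ⟨x, hxS, r, fun z hz => ?_, hr2⟩
      rw [support_cons]
      exact List.mem_cons_of_mem _ (hr1 z hz)
    · push_neg at hq
      have hyu : y = a := by
        rw [support_cons] at hy
        rcases List.mem_cons.mp hy with hy | hy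
        · exact hy
        · exact absurd hS (hq y hy)
      refine ⟨a, hyu ▸ hS, Walk.cons h q, fun z hz => hz, ?_⟩
      intro z hz hzu
      rw [support_cons] at hz
      rcases List.mem_cons.mp hz with hz | hz
      · exact absurd hz hzu
      · exact hq z hz

private lemma menger_combine {G : SimpleGraph V} [DecidableEq V] {s t w : V}
    (hwt : w ≠ t) (hadj : G.Adj w t)
    {P1 P2 : G.Walk s w} (h1 : P1.IsPath) (_h2 : P2.IsPath)
    (hdisj : ∀ v, v ∈ P1.support → v ∈ P2.support → v = s ∨ v = w)
    {x : V} (hx : x ∈ P1.support) (r : G.Walk x t)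
    (hwr : w ∉ r.support)
    (hrS : ∀ y ∈ r.support, y ≠ x → y ∉ P1.support ∧ y ∉ P2.support) :
    ∃ p q : G.Walk s t, p.IsPath ∧ q.IsPath ∧
      ∀ v, v ∈ p.support → v ∈ q.support → v = s ∨ v = t := by
  have hxw : x ≠ w := fun h => hwr (h ▸ r.start_mem_support)
  refine ⟨((P1.takeUntil x hx).append r).bypass,
    (P2.append (Walk.cons hadj Walk.nil)).bypass, bypass_isPath _, bypass_isPath _, ?_⟩
  intro v hvA hvB
  have hvA' : v ∈ (P1.takeUntil x hx).support ∨ v ∈ r.support := by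
    have := support_bypass_subset _ hvA
    rwa [mem_support_append_iff] at this
  have hvB' : v ∈ P2.support ∨ v = t := by
    have := support_bypass_subset _ hvB
    rw [mem_support_append_iff] at this
    rcases this with hh | hh
    · exact Or.inl hh
    · simp only [support_cons, support_nil, List.mem_cons, List.mem_singleton,
        List.not_mem_nil, or_false] at hh
      rcases hh with hh | hh
      · exact Or.inl (hh ▸ P2.end_mem_support)
      · exact Or.inr hh
  rcases hvB' with hvB' | hvB'
  · rcases hvA' with hvA' | hvA'
    · have hvP1 : v ∈ P1.support := P1.support_takeUntil_subset hx hvA'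
      rcases hdisj v hvP1 hvB' with hv | hv
      · exact Or.inl hv
      · exfalso
        have hw2 : w ∈ (P1.dropUntil x hx).support := (P1.dropUntil x hx).end_mem_support
        exact hxw ((menger_takeUntil_dropUntil h1 hx (hv ▸ hvA') hw2).symm)
    · by_cases hvx : v = x
      · subst hvx
        rcases hdisj v hx hvB' with hv | hv
        · exact Or.inl hv
        · exact absurd hv hxw
      · exact absurd hvB' (hrS v hvA' hvx).2
  · exact Or.inr hvB'

private lemma menger_aux [Fintype V] (G : SimpleGraph V) (s : V) :
    ∀ n : ℕ, ∀ t : V, s ≠ t → G.Reachable s t → G.dist s t = n →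
    (∀ v, v ≠ s → v ≠ t → ∃ p : G.Walk s t, p.IsPath ∧ v ∉ p.support) →
    ∃ p q : G.Walk s t, p.IsPath ∧ q.IsPath ∧
      ∀ v, v ∈ p.support → v ∈ q.support → v = s ∨ v = t := by
  classical
  intro n
  induction n using Nat.strong_induction_on with
  | _ n IH =>
  intro t hst hreach hd hcut
  rcases n with _ | _ | m
  · exact absurd (hreach.dist_eq_zero_iff.mp hd) hst
  · have hadj : G.Adj s t := SimpleGraph.dist_eq_one_iff_adj.mp hd
    refine ⟨Walk.cons hadj Walk.nil, Walk.cons hadj Walk.nil, ?_, ?_, ?_⟩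
    · simp [Walk.isPath_def, hst]
    · simp [Walk.isPath_def, hst]
    · intro v hv _
      simp only [support_cons, support_nil, List.mem_cons, List.mem_singleton,
        List.not_mem_nil, or_false] at hv
      tauto
  · obtain ⟨p0, hp0⟩ := hreach.exists_walk_length_eq_dist
    obtain ⟨w, htw, q, hq⟩ := Walk.exists_eq_cons_of_ne (Ne.symm hst) p0.reverse
    have hqlen : q.length = m + 1 := by
      have hl : p0.reverse.length = m + 2 := by rw [Walk.length_reverse, hp0, hd]
      rw [hq, Walk.length_cons] at hl
      omega
    have hreach_sw : G.Reachable s w := ⟨q.reverse⟩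
    have hwt : w ≠ t := fun e => G.irrefl (e ▸ htw)
    have hws : w ≠ s := by
      intro e
      have hadj : G.Adj s t := e ▸ htw.symm
      have hle1 : G.dist s t ≤ (Walk.cons hadj Walk.nil).length := SimpleGraph.dist_le _
      simp only [Walk.length_cons, Walk.length_nil] at hle1
      omega
    have hle : G.dist s w ≤ m + 1 := by
      have := SimpleGraph.dist_le q.reverse
      rwa [Walk.length_reverse, hqlen] at this
    obtain ⟨m0, hm0⟩ := hreach_sw.exists_walk_length_eq_dist
    have hge : m + 1 ≤ G.dist s w := by
      have h2 : G.dist s t ≤ (m0.append (Walk.cons htw.symm Walk.nil)).length :=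
        SimpleGraph.dist_le _
      rw [Walk.length_append, Walk.length_cons, Walk.length_nil, hm0, hd] at h2
      omega
    have hdsw : G.dist s w = m + 1 := le_antisymm hle hge
    have htm0 : t ∉ m0.support := by
      intro htm
      have h3 : G.dist s t ≤ (m0.takeUntil t htm).length := SimpleGraph.dist_le _
      have h4 := m0.length_takeUntil_le htm
      rw [hm0, hdsw] at h4
      omega
    have hcut' : ∀ v, v ≠ s → v ≠ w → ∃ p : G.Walk s w, p.IsPath ∧ v ∉ p.support := by
      intro v hvs hvw
      by_cases hvt : v = t
      · subst hvt
        exact ⟨m0.bypass, bypass_isPath _, fun hm => htm0 (support_bypass_subset _ hm)⟩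
      · obtain ⟨P, hP, hvP⟩ := hcut v hvs hvt
        refine ⟨(P.append (Walk.cons htw Walk.nil)).bypass, bypass_isPath _, ?_⟩
        intro hv
        have hmem := support_bypass_subset _ hv
        rw [mem_support_append_iff] at hmem
        rcases hmem with hh | hh
        · exact hvP hh
        · simp only [support_cons, support_nil, List.mem_cons, List.mem_singleton,
            List.not_mem_nil, or_false] at hh
          tauto
    obtain ⟨P1, P2, h1, h2, hd12⟩ :=
      IH (m + 1) (by omega) w (Ne.symm hws) hreach_sw hdsw hcut'
    by_cases htP1 : t ∈ P1.support
    · refine menger_combine hwt htw.symm h1 h2 hd12 htP1 Walk.nil ?_ ?_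
      · simp [hwt]
      · intro y hy hyt
        simp only [support_nil, List.mem_singleton] at hy
        exact absurd hy hyt
    · by_cases htP2 : t ∈ P2.support
      · refine menger_combine hwt htw.symm h2 h1
          (fun v a b => hd12 v b a) htP2 Walk.nil ?_ ?_
        · simp [hwt]
        · intro y hy hyt
          simp only [support_nil, List.mem_singleton] at hy
          exact absurd hy hyt
      · obtain ⟨Q, hQ, hwQ⟩ := hcut w hws hwt
        have htS : ¬ (t ∈ P1.support ∨ t ∈ P2.support) := by tauto
        obtain ⟨x, hxS, r, hrQ, hrS⟩ := menger_last_entry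
          (fun y => y ∈ P1.support ∨ y ∈ P2.support) Q htS
          ⟨s, Q.start_mem_support, Or.inl P1.start_mem_support⟩
        have hwr : w ∉ r.support := fun hw => hwQ (hrQ w hw)
        have hrS' : ∀ y ∈ r.support, y ≠ x → y ∉ P1.support ∧ y ∉ P2.support := by
          intro y hy hne
          have hns := hrS y hy hne
          push_neg at hns
          exact hns
        rcases hxS with hx | hx
        · exact menger_combine hwt htw.symm h1 h2 hd12 hx r hwr hrS'
        · exact menger_combine hwt htw.symm h2 h1
            (fun v a b => hd12 v b a) hx r hwr
            (fun y hy hne => ⟨(hrS' y hy hne).2, (hrS' y hy hne).1⟩)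

end MengerAux

theorem menger_two_disjoint_paths {V : Type*} [Fintype V]
    (G : SimpleGraph V) (s t : V) (hst : s ≠ t) :
    (∃ p q : G.Walk s t, p.IsPath ∧ q.IsPath ∧
        ∀ v, v ∈ p.support → v ∈ q.support → v = s ∨ v = t) ↔
    (G.Reachable s t ∧
      ∀ v, v ≠ s → v ≠ t → ∃ p : G.Walk s t, p.IsPath ∧ v ∉ p.support) := by
  constructor
  · rintro ⟨p, q, hp, hq, hdisj⟩
    refine ⟨⟨p⟩, ?_⟩
    intro v hvs hvt
    by_cases hvp : v ∈ p.support
    · refine ⟨q, hq, fun hvq => ?_⟩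
      rcases hdisj v hvp hvq with h | h
      · exact hvs h
      · exact hvt h
    · exact ⟨p, hp, hvp⟩
  · rintro ⟨hreach, hcut⟩
    exact menger_aux G s (G.dist s t) t hst hreach rfl hcut
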